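/- Let L ∈ ℝ^{n×n} be symmetric positive definite, let c ∈ ℝ^n, F ∈ ℝ^{m×n}, l ∈ ℝ^m, U_k ∈ ℝ^{p×m}, and define the affine controller κ(x) = K(x − c) + l with K = F L⁻¹. Then κ maps the ellipsoid E(c, L⁻²) into the set {u ∈ ℝ^m : ‖U_k u‖ ≤ 1} if and only if there exists τ ≥ 0 such that the block matrix [[τ·I_n, 0, Fᵀ U_kᵀ],[0, 1 − τ, lᵀ U_kᵀ],[U_k F, U_k l, I_p]] is positive semidefinite. -/

import Mathlib

open Matrix

noncomputable section

/-- Euclidean norm on `Fin k → ℝ`. -/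
def eunorm {k : ℕ} (v : Fin k → ℝ) : ℝ := Real.sqrt (∑ i, v i ^ 2)

/-- Ellipsoid `E(c, P) = {x : (x−c)ᵀ P (x−c) ≤ 1}`. -/
def Ellip {n : ℕ} (c : Fin n → ℝ) (P : Matrix (Fin n) (Fin n) ℝ) : Set (Fin n → ℝ) :=
  {x | (x - c) ⬝ᵥ P.mulVec (x - c) ≤ 1}

/-- A vector as a single-row matrix. -/
def rowV {m : ℕ} (v : Fin m → ℝ) : Matrix (Fin 1) (Fin m) ℝ := Matrix.of fun _ j => v j

/-- A vector as a single-column matrix. -/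
def colV {m : ℕ} (v : Fin m → ℝ) : Matrix (Fin m) (Fin 1) ℝ := Matrix.of fun i _ => v i

/-- A scalar as a 1×1 matrix. -/
def sc (a : ℝ) : Matrix (Fin 1) (Fin 1) ℝ := Matrix.of fun _ _ => a

/-- 3×3 block matrix. -/
def block3 {n1 n2 n3 : Type*}
    (A11 : Matrix n1 n1 ℝ) (A12 : Matrix n1 n2 ℝ) (A13 : Matrix n1 n3 ℝ)
    (A21 : Matrix n2 n1 ℝ) (A22 : Matrix n2 n2 ℝ) (A23 : Matrix n2 n3 ℝ)
    (A31 : Matrix n3 n1 ℝ) (A32 : Matrix n3 n2 ℝ) (A33 : Matrix n3 n3 ℝ) :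
    Matrix ((n1 ⊕ n2) ⊕ n3) ((n1 ⊕ n2) ⊕ n3) ℝ :=
  fromBlocks (fromBlocks A11 A12 A21 A22) (fromRows A13 A23) (fromCols A31 A32) A33

lemma sc_mulVec (a : ℝ) (s : Fin 1 → ℝ) : sc a *ᵥ s = fun _ => a * s 0 := by
  funext i
  simp [sc, Matrix.mulVec, dotProduct, Fin.sum_univ_one]

lemma rowV_mulVec {m : ℕ} (w : Fin m → ℝ) (u : Fin m → ℝ) :
    rowV w *ᵥ u = fun _ => w ⬝ᵥ u := by
  funext i
  simp [rowV, Matrix.mulVec, dotProduct]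

lemma colV_mulVec {m : ℕ} (w : Fin m → ℝ) (s : Fin 1 → ℝ) :
    colV w *ᵥ s = s 0 • w := by
  funext i
  simp [colV, Matrix.mulVec, dotProduct, Fin.sum_univ_one, mul_comm]

lemma dot_tr {n p : ℕ} (A : Matrix (Fin p) (Fin n) ℝ) (y : Fin n → ℝ) (u : Fin p → ℝ) :
    y ⬝ᵥ (Aᵀ *ᵥ u) = u ⬝ᵥ (A *ᵥ y) := by
  rw [mulVec_transpose, dotProduct_comm, ← dotProduct_mulVec]

lemma qform {n p : ℕ} (A : Matrix (Fin p) (Fin n) ℝ) (b : Fin p → ℝ) (τ : ℝ)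
    (y : Fin n → ℝ) (s : Fin 1 → ℝ) (u : Fin p → ℝ) :
    ((y ⊕ᵥ s) ⊕ᵥ u) ⬝ᵥ ((block3 (τ • (1 : Matrix (Fin n) (Fin n) ℝ)) 0 Aᵀ
        0 (sc (1 - τ)) (rowV b) A (colV b) (1 : Matrix (Fin p) (Fin p) ℝ)) *ᵥ ((y ⊕ᵥ s) ⊕ᵥ u))
      = τ * (y ⬝ᵥ y) + (1 - τ) * (s 0) ^ 2 + (u ⬝ᵥ u)
        + 2 * (u ⬝ᵥ (A *ᵥ y)) + 2 * (s 0) * (u ⬝ᵥ b) := by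
  rw [block3, fromBlocks_mulVec, Sum.elim_comp_inl, Sum.elim_comp_inr,
    fromBlocks_mulVec, Sum.elim_comp_inl, Sum.elim_comp_inr,
    fromRows_mulVec, fromCols_mulVec_sumElim,
    zero_mulVec, zero_mulVec, add_zero, zero_add,
    sc_mulVec, rowV_mulVec, colV_mulVec, one_mulVec,
    smul_mulVec, one_mulVec]
  rw [sumElim_dotProduct_sumElim]
  have e1 : (fun _ => (1 - τ) * s 0) + (fun _ => b ⬝ᵥ u) = fun _ : Fin 1 => ((1 - τ) * s 0 + b ⬝ᵥ u) := rfl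
  rw [show (τ • y ⊕ᵥ (fun _ => (1 - τ) * s 0)) + (Aᵀ *ᵥ u ⊕ᵥ (fun _ => b ⬝ᵥ u))
      = ((τ • y + Aᵀ *ᵥ u) ⊕ᵥ (fun _ : Fin 1 => (1 - τ) * s 0 + b ⬝ᵥ u)) from by
    funext i; cases i <;> simp]
  rw [sumElim_dotProduct_sumElim, dotProduct_add, dotProduct_smul, dot_tr,
    dotProduct_add, dotProduct_add, dotProduct_comm u (A *ᵥ y)]
  have e2 : s ⬝ᵥ (fun _ : Fin 1 => (1 - τ) * s 0 + b ⬝ᵥ u) = s 0 * ((1 - τ) * s 0 + b ⬝ᵥ u) := by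
    simp [dotProduct, Fin.sum_univ_one]
  rw [e2]
  simp only [dotProduct_smul, smul_eq_mul, dotProduct_comm b u]
  ring

lemma dps_nonneg' {k : ℕ} (v : Fin k → ℝ) : 0 ≤ v ⬝ᵥ v :=
  Finset.sum_nonneg fun _ _ => mul_self_nonneg _

lemma block3_herm {n p : ℕ} (A : Matrix (Fin p) (Fin n) ℝ) (b : Fin p → ℝ) (τ : ℝ) :
    (block3 (τ • (1 : Matrix (Fin n) (Fin n) ℝ)) 0 Aᵀ
        0 (sc (1 - τ)) (rowV b) A (colV b) (1 : Matrix (Fin p) (Fin p) ℝ)).IsHermitian := by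
  unfold Matrix.IsHermitian
  rw [conjTranspose_eq_transpose_of_trivial, block3, fromBlocks_transpose, fromBlocks_transpose,
    transpose_fromRows, transpose_fromCols, transpose_smul, transpose_one, transpose_zero,
    transpose_one, transpose_transpose]
  have h1 : (sc (1 - τ))ᵀ = sc (1 - τ) := by funext i j; simp [sc]
  have h2 : (rowV b)ᵀ = colV b := by funext i j; simp [rowV, colV]
  have h3 : (colV b)ᵀ = rowV b := by funext i j; simp [rowV, colV]
  rw [h1, h2, h3, transpose_zero]

lemma block3_psd_iff {n p : ℕ} (A : Matrix (Fin p) (Fin n) ℝ) (b : Fin p → ℝ) (τ : ℝ) :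
    (block3 (τ • (1 : Matrix (Fin n) (Fin n) ℝ)) 0 Aᵀ
        0 (sc (1 - τ)) (rowV b) A (colV b) (1 : Matrix (Fin p) (Fin p) ℝ)).PosSemidef ↔
      ∀ (y : Fin n → ℝ) (t : ℝ),
        (A *ᵥ y + t • b) ⬝ᵥ (A *ᵥ y + t • b) ≤ τ * (y ⬝ᵥ y) + (1 - τ) * t ^ 2 := by
  constructor
  · intro hM y t
    set w : Fin p → ℝ := A *ᵥ y + t • b with hw
    have h := hM.dotProduct_mulVec_nonneg ((y ⊕ᵥ (fun _ : Fin 1 => t)) ⊕ᵥ (-w))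
    simp only [star_trivial] at h
    rw [qform] at h
    have e1 : (-w) ⬝ᵥ (-w) = w ⬝ᵥ w := by rw [neg_dotProduct, dotProduct_neg, neg_neg]
    have e2 : (-w) ⬝ᵥ (A *ᵥ y) = -(w ⬝ᵥ (A *ᵥ y)) := by rw [neg_dotProduct]
    have e3 : (-w) ⬝ᵥ b = -(w ⬝ᵥ b) := by rw [neg_dotProduct]
    rw [e1, e2, e3] at h
    have e4 : w ⬝ᵥ w = w ⬝ᵥ (A *ᵥ y) + t * (w ⬝ᵥ b) := by
      rw [hw, dotProduct_add, dotProduct_smul, smul_eq_mul]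
    linarith
  · intro hineq
    refine .of_dotProduct_mulVec_nonneg (block3_herm A b τ) fun x => ?_
    simp only [star_trivial]
    set y : Fin n → ℝ := fun i => x (Sum.inl (Sum.inl i)) with hy
    set s : Fin 1 → ℝ := fun i => x (Sum.inl (Sum.inr i)) with hs
    set u : Fin p → ℝ := fun i => x (Sum.inr i) with hu
    have hx : x = (y ⊕ᵥ s) ⊕ᵥ u := by
      funext i
      rcases i with (i | i) | i <;> rfl
    rw [hx, qform]
    set w : Fin p → ℝ := A *ᵥ y + s 0 • b with hw
    have h1 := hineq y (s 0)
    rw [← hw] at h1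
    have h2 : 0 ≤ (u + w) ⬝ᵥ (u + w) := dps_nonneg' _
    have h3 : (u + w) ⬝ᵥ (u + w) = u ⬝ᵥ u + 2 * (u ⬝ᵥ w) + w ⬝ᵥ w := by
      simp only [dotProduct_add, add_dotProduct]
      rw [dotProduct_comm w u]; ring
    have h4 : u ⬝ᵥ w = u ⬝ᵥ (A *ᵥ y) + s 0 * (u ⬝ᵥ b) := by
      rw [hw, dotProduct_add, dotProduct_smul, smul_eq_mul]
    linarith

lemma dps_nonneg {k : ℕ} (v : Fin k → ℝ) : 0 ≤ v ⬝ᵥ v :=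
  Finset.sum_nonneg fun _ _ => mul_self_nonneg _

lemma dot_expand {k : ℕ} (u v : Fin k → ℝ) (t : ℝ) :
    (u + t • v) ⬝ᵥ (u + t • v) = u ⬝ᵥ u + 2 * t * (u ⬝ᵥ v) + t ^ 2 * (v ⬝ᵥ v) := by
  simp [dotProduct_add, add_dotProduct, dotProduct_smul, smul_dotProduct,
    dotProduct_comm v u, smul_eq_mul]
  ring

lemma dot_expand' {k : ℕ} (u v : Fin k → ℝ) :
    (u + v) ⬝ᵥ (u + v) = u ⬝ᵥ u + 2 * (u ⬝ᵥ v) + v ⬝ᵥ v := by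
  simp [dotProduct_add, add_dotProduct, dotProduct_comm v u]; ring

set_option maxHeartbeats 1000000 in
lemma key {n p : ℕ} (A : Matrix (Fin p) (Fin n) ℝ) (b : Fin p → ℝ)
    (hyp : ∀ y : Fin n → ℝ, y ⬝ᵥ y ≤ 1 → (A *ᵥ y + b) ⬝ᵥ (A *ᵥ y + b) ≤ 1) :
    ∃ τ : ℝ, 0 ≤ τ ∧ ∀ (y : Fin n → ℝ) (t : ℝ),
      (A *ᵥ y + t • b) ⬝ᵥ (A *ᵥ y + t • b) ≤ τ * (y ⬝ᵥ y) + (1 - τ) * t ^ 2 := by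
  -- maximize f over the unit ball
  obtain ⟨y₀, hy₀, hmax⟩ : ∃ y₀, y₀ ⬝ᵥ y₀ ≤ 1 ∧ ∀ y : Fin n → ℝ, y ⬝ᵥ y ≤ 1 →
      (A *ᵥ y + b) ⬝ᵥ (A *ᵥ y + b) ≤ (A *ᵥ y₀ + b) ⬝ᵥ (A *ᵥ y₀ + b) := by
    set S : Set (Fin n → ℝ) := {y | y ⬝ᵥ y ≤ 1} with hS
    have hcont : Continuous fun y : Fin n → ℝ => y ⬝ᵥ y := by
      unfold dotProduct
      exact continuous_finset_sum _ fun i _ => (continuous_apply i).mul (continuous_apply i)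
    have hmv : Continuous fun y : Fin n → ℝ => A *ᵥ y + b := by
      apply Continuous.add _ continuous_const
      apply continuous_pi; intro i
      simp only [Matrix.mulVec, dotProduct]
      exact continuous_finset_sum _ fun j _ => continuous_const.mul (continuous_apply j)
    have hfc : Continuous fun y : Fin n → ℝ => (A *ᵥ y + b) ⬝ᵥ (A *ᵥ y + b) := by
      unfold dotProduct
      exact continuous_finset_sum _ fun i _ =>
        ((continuous_apply i).comp hmv).mul ((continuous_apply i).comp hmv)
    have hclosed : IsClosed S := isClosed_le hcont continuous_const
    have hsub : S ⊆ Metric.closedBall 0 1 := by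
      intro y hy
      rw [Metric.mem_closedBall, dist_zero_right,
        pi_norm_le_iff_of_nonneg (by norm_num : (0:ℝ) ≤ 1)]
      intro i
      rw [Real.norm_eq_abs, abs_le]
      have h1 : y i * y i ≤ y ⬝ᵥ y :=
        Finset.single_le_sum (fun j _ => mul_self_nonneg (y j)) (Finset.mem_univ i)
      have h2 := le_trans h1 hy
      constructor <;> nlinarith
    have hcomp : IsCompact S := (isCompact_closedBall 0 1).of_isClosed_subset hclosed hsub
    have hne : S.Nonempty := ⟨0, by simp [hS, dotProduct]⟩
    obtain ⟨y₀, hy₀, hmax⟩ := hcomp.exists_isMaxOn hne hfc.continuousOn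
    exact ⟨y₀, hy₀, fun y hy => hmax hy⟩
  set w : Fin p → ℝ := A *ᵥ y₀ + b with hw
  have hw1 : w ⬝ᵥ w ≤ 1 := hyp y₀ hy₀
  -- expansion of f at perturbations of y₀
  have hexp : ∀ z : Fin n → ℝ, (A *ᵥ (y₀ + z) + b) ⬝ᵥ (A *ᵥ (y₀ + z) + b)
      = w ⬝ᵥ w + 2 * ((A *ᵥ z) ⬝ᵥ w) + (A *ᵥ z) ⬝ᵥ (A *ᵥ z) := by
    intro z
    have h1 : A *ᵥ (y₀ + z) + b = w + A *ᵥ z := by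
      rw [mulVec_add, hw]; abel
    rw [h1, dot_expand', dotProduct_comm w (A *ᵥ z)]
  rcases lt_or_eq_of_le hy₀ with hlt | hy1
  · -- interior maximum: A = 0, take τ = 0
    have hA : ∀ d : Fin n → ℝ, A *ᵥ d = 0 := by
      intro d
      set a : ℝ := y₀ ⬝ᵥ d with ha
      set D : ℝ := d ⬝ᵥ d with hD
      set c : ℝ := (A *ᵥ d) ⬝ᵥ w with hc
      set s : ℝ := (A *ᵥ d) ⬝ᵥ (A *ᵥ d) with hs
      have hDnn : 0 ≤ D := dps_nonneg d
      have hsnn : 0 ≤ s := dps_nonneg _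
      have key2 : ∀ t : ℝ, y₀ ⬝ᵥ y₀ + 2 * t * a + t ^ 2 * D ≤ 1 →
          2 * t * c + t ^ 2 * s ≤ 0 := by
        intro t ht
        have hmem : (y₀ + t • d) ⬝ᵥ (y₀ + t • d) ≤ 1 := by
          rw [dot_expand]; exact ht
        have h3 := hmax _ hmem
        rw [hexp (t • d)] at h3
        rw [mulVec_smul] at h3
        rw [smul_dotProduct, smul_dotProduct, dotProduct_smul, smul_eq_mul, smul_eq_mul,
          smul_eq_mul] at h3
        nlinarith [h3]
      set ε : ℝ := min 1 ((1 - y₀ ⬝ᵥ y₀) / (2 * |a| + D + 1)) with hε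
      have hεpos : 0 < ε := by
        apply lt_min one_pos
        apply div_pos (by linarith) (by positivity)
      have hεle : ε * (2 * |a| + D + 1) ≤ 1 - y₀ ⬝ᵥ y₀ := by
        have h4 : ε ≤ (1 - y₀ ⬝ᵥ y₀) / (2 * |a| + D + 1) := min_le_right _ _
        have h5 : (0:ℝ) < 2 * |a| + D + 1 := by positivity
        calc ε * (2 * |a| + D + 1) ≤ ((1 - y₀ ⬝ᵥ y₀) / (2 * |a| + D + 1)) * (2 * |a| + D + 1) := by
              apply mul_le_mul_of_nonneg_right h4 (le_of_lt h5)
          _ = 1 - y₀ ⬝ᵥ y₀ := by field_simp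
      have hε1 : ε ≤ 1 := min_le_left _ _
      have habs1 : ε * (|a| - a) ≥ 0 := mul_nonneg hεpos.le (by linarith [le_abs_self a])
      have habs2 : ε * (|a| + a) ≥ 0 := mul_nonneg hεpos.le (by linarith [neg_le_abs a])
      have hDe : (1 - ε) * (ε * D) ≥ 0 :=
        mul_nonneg (by linarith) (mul_nonneg hεpos.le hDnn)
      have hp := key2 ε (by nlinarith)
      have hm := key2 (-ε) (by nlinarith)
      have h6 : ε ^ 2 * s ≤ ε ^ 2 * 0 := by nlinarith
      have hs1 : s ≤ 0 := le_of_mul_le_mul_left h6 (pow_pos hεpos 2)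
      have hs0 : s = 0 := le_antisymm hs1 hsnn
      rw [hs] at hs0
      exact dotProduct_self_eq_zero.mp hs0
    refine ⟨0, le_refl 0, fun y t => ?_⟩
    have hb1 : b ⬝ᵥ b ≤ 1 := by
      have := hyp 0 (by simp [dotProduct])
      rwa [mulVec_zero, zero_add] at this
    rw [hA y, zero_add]
    rw [smul_dotProduct, dotProduct_smul, smul_eq_mul, smul_eq_mul]
    nlinarith [sq_nonneg t, dps_nonneg y]
  · -- boundary maximum
    set μ : ℝ := (A *ᵥ y₀) ⬝ᵥ w with hμ
    have hstar : ∀ z : Fin n → ℝ, z ⬝ᵥ z + 2 * (y₀ ⬝ᵥ z) = 0 →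
        2 * ((A *ᵥ z) ⬝ᵥ w) + (A *ᵥ z) ⬝ᵥ (A *ᵥ z) ≤ 0 := by
      intro z hz
      have hmem : (y₀ + z) ⬝ᵥ (y₀ + z) ≤ 1 := by
        rw [dot_expand']; linarith
      have h3 := hmax _ hmem
      rw [hexp z] at h3
      linarith
    have hss : ∀ d : Fin n → ℝ, (y₀ ⬝ᵥ d) ^ 2 * ((A *ᵥ d) ⬝ᵥ (A *ᵥ d)) ≤
        (y₀ ⬝ᵥ d) * (d ⬝ᵥ d) * ((A *ᵥ d) ⬝ᵥ w) := by
      intro d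
      by_cases ha : y₀ ⬝ᵥ d = 0
      · simp [ha]
      · have hd0 : d ≠ 0 := by
          intro h; exact ha (by rw [h, dotProduct_zero])
        have hD : 0 < d ⬝ᵥ d :=
          lt_of_le_of_ne (dps_nonneg d) fun h => hd0 (dotProduct_self_eq_zero.mp h.symm)
        set t : ℝ := -2 * (y₀ ⬝ᵥ d) / (d ⬝ᵥ d) with ht
        have hz : (t • d) ⬝ᵥ (t • d) + 2 * (y₀ ⬝ᵥ (t • d)) = 0 := by
          rw [smul_dotProduct, dotProduct_smul, dotProduct_smul, smul_eq_mul, smul_eq_mul,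
            smul_eq_mul, ht]
          field_simp
          ring
        have h4 := hstar _ hz
        rw [mulVec_smul, smul_dotProduct, smul_dotProduct, dotProduct_smul, smul_eq_mul,
          smul_eq_mul, smul_eq_mul] at h4
        have hD2 : (0:ℝ) < (d ⬝ᵥ d) ^ 2 := pow_pos hD 2
        have h6 : (d ⬝ᵥ d) ^ 2 * (2 * (t * ((A *ᵥ d) ⬝ᵥ w)) + t * (t * ((A *ᵥ d) ⬝ᵥ (A *ᵥ d)))) ≤ 0 :=
          mul_nonpos_of_nonneg_of_nonpos hD2.le h4
        have h7 : (d ⬝ᵥ d) ^ 2 * (2 * (t * ((A *ᵥ d) ⬝ᵥ w)) + t * (t * ((A *ᵥ d) ⬝ᵥ (A *ᵥ d))))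
            = -4 * ((y₀ ⬝ᵥ d) * (d ⬝ᵥ d) * ((A *ᵥ d) ⬝ᵥ w))
              + 4 * ((y₀ ⬝ᵥ d) ^ 2 * ((A *ᵥ d) ⬝ᵥ (A *ᵥ d))) := by
          rw [ht]; field_simp; ring
        rw [h7] at h6
        linarith
    have hμs : (A *ᵥ y₀) ⬝ᵥ (A *ᵥ y₀) ≤ μ := by
      have h4 := hss y₀
      rw [hy1] at h4
      simpa using h4
    have hμnn : 0 ≤ μ := le_trans (dps_nonneg _) hμs
    -- gradient condition
    have hP1 : ∀ d : Fin n → ℝ, (A *ᵥ d) ⬝ᵥ w = μ * (y₀ ⬝ᵥ d) := by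
      intro d
      set a : ℝ := y₀ ⬝ᵥ d with ha
      set w' : Fin n → ℝ := d - a • y₀ with hw'
      have hdw : d = w' + a • y₀ := by rw [hw']; abel
      have horth : y₀ ⬝ᵥ w' = 0 := by
        rw [hw', dotProduct_sub, dotProduct_smul, smul_eq_mul, hy1]; ring
      set c' : ℝ := (A *ᵥ w') ⬝ᵥ w with hc'
      set W : ℝ := w' ⬝ᵥ w' with hW
      have hWnn : 0 ≤ W := dps_nonneg _
      have hpert : ∀ ε : ℝ, 0 ≤ ε * (W + ε ^ 2) * (c' + ε * μ) := by
        intro ε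
        have h4 := hss (w' + ε • y₀)
        have e1 : y₀ ⬝ᵥ (w' + ε • y₀) = ε := by
          rw [dotProduct_add, dotProduct_smul, smul_eq_mul, horth, hy1]; ring
        have e2 : (w' + ε • y₀) ⬝ᵥ (w' + ε • y₀) = W + ε ^ 2 := by
          rw [dot_expand, dotProduct_comm w' y₀, horth, hy1]; ring
        have e3 : (A *ᵥ (w' + ε • y₀)) ⬝ᵥ w = c' + ε * μ := by
          rw [mulVec_add, mulVec_smul, add_dotProduct, smul_dotProduct, smul_eq_mul]
        rw [e1, e2, e3] at h4
        have h5 : 0 ≤ ε ^ 2 * ((A *ᵥ (w' + ε • y₀)) ⬝ᵥ (A *ᵥ (w' + ε • y₀))) :=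
          mul_nonneg (sq_nonneg ε) (dps_nonneg _)
        linarith
      have hposε : ∀ ε : ℝ, 0 < ε → 0 ≤ c' + ε * μ := by
        intro ε hε
        by_contra hcon
        push_neg at hcon
        have := mul_neg_of_pos_of_neg
          (mul_pos hε (add_pos_of_nonneg_of_pos hWnn (pow_pos hε 2))) hcon
        have h8 := hpert ε
        nlinarith
      have hnegε : ∀ ε : ℝ, ε < 0 → c' + ε * μ ≤ 0 := by
        intro ε hε
        by_contra hcon
        push_neg at hcon
        have hk : ε * (W + ε ^ 2) < 0 :=
          mul_neg_of_neg_of_pos hε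
            (add_pos_of_nonneg_of_pos hWnn (by nlinarith : (0:ℝ) < ε ^ 2))
        have := mul_neg_of_neg_of_pos hk hcon
        have h8 := hpert ε
        nlinarith
      have hc'nn : 0 ≤ c' := by
        by_contra h
        push_neg at h
        have h9 := hposε (-c' / (2 * (μ + 1))) (div_pos (by linarith) (by linarith))
        have h10 : 0 ≤ (c' + -c' / (2 * (μ + 1)) * μ) * (2 * (μ + 1)) :=
          mul_nonneg h9 (by linarith)
        have h11 : (c' + -c' / (2 * (μ + 1)) * μ) * (2 * (μ + 1)) = c' * (μ + 2) := by
          field_simp; ring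
        nlinarith
      have hc'np : c' ≤ 0 := by
        by_contra h
        push_neg at h
        have h9 := hnegε (-c' / (2 * (μ + 1)))
          (div_neg_of_neg_of_pos (by linarith) (by linarith))
        have h10 : (c' + -c' / (2 * (μ + 1)) * μ) * (2 * (μ + 1)) ≤ 0 :=
          mul_nonpos_of_nonpos_of_nonneg h9 (by linarith)
        have h11 : (c' + -c' / (2 * (μ + 1)) * μ) * (2 * (μ + 1)) = c' * (μ + 2) := by
          field_simp; ring
        nlinarith
      have hc'0 : c' = 0 := le_antisymm hc'np hc'nn
      rw [hdw, mulVec_add, mulVec_smul, add_dotProduct, smul_dotProduct, smul_eq_mul,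
        ← hc', hc'0]
      ring
    -- curvature condition
    have hP3' : ∀ d : Fin n → ℝ, y₀ ⬝ᵥ d ≠ 0 →
        (A *ᵥ d) ⬝ᵥ (A *ᵥ d) ≤ μ * (d ⬝ᵥ d) := by
      intro d ha
      have h4 := hss d
      rw [hP1 d] at h4
      have ha2 : 0 < (y₀ ⬝ᵥ d) ^ 2 := by positivity
      have h5 : (y₀ ⬝ᵥ d) ^ 2 * ((A *ᵥ d) ⬝ᵥ (A *ᵥ d)) ≤ (y₀ ⬝ᵥ d) ^ 2 * (μ * (d ⬝ᵥ d)) := by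
        nlinarith
      exact le_of_mul_le_mul_left h5 ha2
    have hP3 : ∀ d : Fin n → ℝ, (A *ᵥ d) ⬝ᵥ (A *ᵥ d) ≤ μ * (d ⬝ᵥ d) := by
      intro d
      by_cases ha : y₀ ⬝ᵥ d = 0
      · set X : ℝ := (A *ᵥ d) ⬝ᵥ (A *ᵥ y₀) with hX
        set s : ℝ := (A *ᵥ d) ⬝ᵥ (A *ᵥ d) with hs
        set s₀ : ℝ := (A *ᵥ y₀) ⬝ᵥ (A *ᵥ y₀) with hs₀
        set D : ℝ := d ⬝ᵥ d with hD
        have hpert : ∀ ε : ℝ, ε ≠ 0 → s + 2 * ε * X + ε ^ 2 * s₀ ≤ μ * (D + ε ^ 2) := by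
          intro ε hε
          have e1 : y₀ ⬝ᵥ (d + ε • y₀) = ε := by
            rw [dotProduct_add, dotProduct_smul, smul_eq_mul, ha, hy1]; ring
          have h5 := hP3' (d + ε • y₀) (by rw [e1]; exact hε)
          have e2 : (d + ε • y₀) ⬝ᵥ (d + ε • y₀) = D + ε ^ 2 := by
            rw [dot_expand, dotProduct_comm d y₀, ha, hy1]; ring
          have e3 : A *ᵥ (d + ε • y₀) = A *ᵥ d + ε • (A *ᵥ y₀) := by
            rw [mulVec_add, mulVec_smul]
          rw [e2, e3, dot_expand] at h5
          exact h5
        by_contra hcon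
        push_neg at hcon
        set δ : ℝ := s - μ * D with hδ
        have hδpos : 0 < δ := by simp only [hδ]; linarith
        have hM : 0 ≤ μ - s₀ := by linarith [hμs]
        set ε : ℝ := min 1 (δ / (2 * (μ - s₀ + 1))) with hε
        have hεpos : 0 < ε := lt_min one_pos (by positivity)
        have hε1 : ε ≤ 1 := min_le_left _ _
        have hεle : ε * (2 * (μ - s₀ + 1)) ≤ δ := by
          have h4 : ε ≤ δ / (2 * (μ - s₀ + 1)) := min_le_right _ _
          have h5 : (0:ℝ) < 2 * (μ - s₀ + 1) := by positivity
          calc ε * (2 * (μ - s₀ + 1)) ≤ (δ / (2 * (μ - s₀ + 1))) * (2 * (μ - s₀ + 1)) :=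
                mul_le_mul_of_nonneg_right h4 h5.le
            _ = δ := by field_simp
        have hp := hpert ε hεpos.ne'
        have hm := hpert (-ε) (by simpa using hεpos.ne')
        have hcomb : δ ≤ ε ^ 2 * (μ - s₀) := by nlinarith
        have hsq : ε ^ 2 * (μ - s₀) ≤ ε * (μ - s₀) := by nlinarith
        nlinarith
      · exact hP3' d ha
    refine ⟨μ, hμnn, fun y t => ?_⟩
    set z : Fin n → ℝ := y - t • y₀ with hzdef
    have h1 : A *ᵥ y + t • b = A *ᵥ z + t • w := by
      rw [hzdef, mulVec_sub, mulVec_smul, hw, smul_add]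
      abel
    have h4 : z ⬝ᵥ z = y ⬝ᵥ y - 2 * t * (y₀ ⬝ᵥ y) + t ^ 2 := by
      rw [hzdef, sub_eq_add_neg, ← neg_smul, dot_expand, dotProduct_comm y y₀, hy1]
      ring
    have h5 : y₀ ⬝ᵥ z = y₀ ⬝ᵥ y - t := by
      rw [hzdef, dotProduct_sub, dotProduct_smul, smul_eq_mul, hy1]
      ring
    rw [h1, dot_expand]
    have h2 := hP3 z
    have h3 := hP1 z
    have h6 : μ * (z ⬝ᵥ z) = μ * (y ⬝ᵥ y) - 2 * t * μ * (y₀ ⬝ᵥ y) + μ * t ^ 2 := by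
      rw [h4]; ring
    have h7 : 2 * t * ((A *ᵥ z) ⬝ᵥ w) = 2 * t * μ * (y₀ ⬝ᵥ y) - 2 * μ * t ^ 2 := by
      rw [h3, h5]; ring
    have h8 : t ^ 2 * (w ⬝ᵥ w) ≤ t ^ 2 * 1 := mul_le_mul_of_nonneg_left hw1 (sq_nonneg t)
    linarith

lemma eunorm_le_one {k : ℕ} (v : Fin k → ℝ) : eunorm v ≤ 1 ↔ v ⬝ᵥ v ≤ 1 := by
  have hd : v ⬝ᵥ v = ∑ i, v i ^ 2 := by simp [dotProduct, sq]
  unfold eunorm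
  rw [← hd]
  constructor
  · intro h
    have h2 : 0 ≤ v ⬝ᵥ v := dps_nonneg v
    nlinarith [Real.sq_sqrt h2, Real.sqrt_nonneg (v ⬝ᵥ v)]
  · intro h
    calc Real.sqrt (v ⬝ᵥ v) ≤ Real.sqrt 1 := Real.sqrt_le_sqrt h
      _ = 1 := Real.sqrt_one

/-- The affine controller `κ(x) = F L⁻¹ (x − c) + l` maps `E(c, L⁻²)` into
`{u : ‖U u‖ ≤ 1}` iff there exists `τ ≥ 0` with
`[[τI, 0, Fᵀ Uᵀ],[0, 1 − τ, lᵀ Uᵀ],[U F, U l, I]] ⪰ 0`. -/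
theorem controller_input_constraint_iff {n m p : ℕ}
    (L : Matrix (Fin n) (Fin n) ℝ) (hL : L.PosDef)
    (c : Fin n → ℝ) (F : Matrix (Fin m) (Fin n) ℝ) (l : Fin m → ℝ)
    (U : Matrix (Fin p) (Fin m) ℝ)
    (κ : (Fin n → ℝ) → (Fin m → ℝ))
    (hκ : ∀ x, κ x = (F * L⁻¹).mulVec (x - c) + l) :
    (∀ x ∈ Ellip c (L ^ 2)⁻¹, eunorm (U.mulVec (κ x)) ≤ 1) ↔
      ∃ τ : ℝ, 0 ≤ τ ∧
        (block3 (τ • (1 : Matrix (Fin n) (Fin n) ℝ)) 0 (U * F)ᵀ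
                0 (sc (1 - τ)) (rowV (U.mulVec l))
                (U * F) (colV (U.mulVec l)) (1 : Matrix (Fin p) (Fin p) ℝ)).PosSemidef := by
  have hdet : IsUnit L.det := isUnit_iff_ne_zero.mpr (ne_of_gt hL.det_pos)
  have hsym : Lᵀ = L := by
    have h := hL.1
    unfold Matrix.IsHermitian at h
    rwa [conjTranspose_eq_transpose_of_trivial] at h
  have hinv1 : L⁻¹ * L = 1 := nonsing_inv_mul L hdet
  have hinv2 : L * L⁻¹ = 1 := mul_nonsing_inv L hdet
  have id1 : ∀ y : Fin n → ℝ, (L *ᵥ y) ⬝ᵥ ((L ^ 2)⁻¹ *ᵥ (L *ᵥ y)) = y ⬝ᵥ y := by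
    intro y
    have e0 : (L ^ 2)⁻¹ * L = L⁻¹ := by
      rw [pow_two, Matrix.mul_inv_rev, Matrix.mul_assoc, hinv1, Matrix.mul_one]
    have e1 : L *ᵥ y = y ᵥ* L := by
      have e := mulVec_transpose L y
      rwa [hsym] at e
    rw [mulVec_mulVec, e0, e1, dotProduct_mulVec, vecMul_vecMul, hinv2, vecMul_one]
  have hmem : ∀ y : Fin n → ℝ, (L *ᵥ y + c) ∈ Ellip c (L ^ 2)⁻¹ ↔ y ⬝ᵥ y ≤ 1 := by
    intro y
    unfold Ellip
    rw [Set.mem_setOf_eq, add_sub_cancel_right, id1]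
  have hval : ∀ y : Fin n → ℝ, U *ᵥ (κ (L *ᵥ y + c)) = (U * F) *ᵥ y + U *ᵥ l := by
    intro y
    rw [hκ, add_sub_cancel_right, mulVec_mulVec, Matrix.mul_assoc, hinv1, Matrix.mul_one,
      mulVec_add, mulVec_mulVec]
  constructor
  · intro hmap
    obtain ⟨τ, hτ, hineq⟩ := key (U * F) (U *ᵥ l) (fun y hy => by
      have h := hmap (L *ᵥ y + c) ((hmem y).mpr hy)
      rwa [hval y, eunorm_le_one] at h)
    exact ⟨τ, hτ, (block3_psd_iff (U * F) (U *ᵥ l) τ).mpr hineq⟩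
  · rintro ⟨τ, hτ, hM⟩ x hx
    have hineq := (block3_psd_iff (U * F) (U *ᵥ l) τ).mp hM
    set y : Fin n → ℝ := L⁻¹ *ᵥ (x - c) with hy
    have hxe : x = L *ᵥ y + c := by
      rw [hy, mulVec_mulVec, hinv2, one_mulVec, sub_add_cancel]
    have hy1 : y ⬝ᵥ y ≤ 1 := by
      rw [← hmem y, ← hxe]
      exact hx
    have h5 := hineq y 1
    rw [one_smul, one_pow] at h5
    rw [hxe, hval y, eunorm_le_one]
    have h6 : τ * (y ⬝ᵥ y) ≤ τ * 1 := mul_le_mul_of_nonneg_left hy1 hτ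
    linarith
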